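/- (Section 5.5, osp(2m+1|2)) Let λ ∈ 𝒫 and 1 ≤ k ≤ m with ⟨λ+ρ, δ+ε_k⟩ = 0 and λ_k ≠ 0. Let t be the largest index with k ≤ t ≤ m and λ_t = λ_k, and set φ(λ) = λ − (t−k+1)δ − Σ_{i=k}^{t} ε_i. Then φ(λ) ∈ 𝒫 and λ ∼ φ(λ). -/

import Mathlib

open Finset
open Fin.NatCast

/-- The standard basis vector `ε_i` of `ℚ^{1+m}` (with `ε_0 = δ`). -/
noncomputable def eps (m i : ℕ) : Fin (m+1) → ℚ := Pi.single (i : Fin (m+1)) 1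

/-- The bilinear form `⟨λ, μ⟩ = −λ₀μ₀ + Σ_{i=1}^m λ_i μ_i` on `ℚ^{1+m}`. -/
noncomputable def form (m : ℕ) (l μ : Fin (m+1) → ℚ) : ℚ :=
  -(l 0 * μ 0) + ∑ i : Fin (m+1), (if i = 0 then 0 else l i * μ i)

/-- `ρ` for `osp(2m|2)`: `ρ₀ = 1−m`, `ρ_i = m−i`. -/
noncomputable def rhoD (m : ℕ) : Fin (m+1) → ℚ :=
  fun i => if i = 0 then 1 - (m : ℚ) else (m : ℚ) - (i : ℕ)

/-- `ρ` for `osp(2m+1|2)`: `ρ₀ = 1/2−m`, `ρ_i = m−i+1/2`. -/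
noncomputable def rhoB (m : ℕ) : Fin (m+1) → ℚ :=
  fun i => if i = 0 then 1/2 - (m : ℚ) else (m : ℚ) - (i : ℕ) + 1/2

/-- All coordinates are integers. -/
def IsIntegralWt (m : ℕ) (l : Fin (m+1) → ℚ) : Prop := ∀ i, ∃ z : ℤ, l i = z

/-- Dominant integral weights for `osp(2m|2)`. -/
def PD (m : ℕ) (l : Fin (m+1) → ℚ) : Prop :=
  IsIntegralWt m l ∧ 0 ≤ l 0 ∧
  (∀ i j : ℕ, 1 ≤ i → i ≤ j → j ≤ m - 1 → l (j : Fin (m+1)) ≤ l (i : Fin (m+1))) ∧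
  |l (m : Fin (m+1))| ≤ l ((m - 1 : ℕ) : Fin (m+1)) ∧
  (∀ i : ℕ, 1 ≤ i → i ≤ m - 1 → 0 ≤ l (i : Fin (m+1))) ∧
  (∀ i : ℕ, 1 ≤ i → i ≤ m → l 0 < (i : ℚ) → l (i : Fin (m+1)) = 0)

/-- Dominant integral weights for `osp(2m+1|2)`. -/
def PB (m : ℕ) (l : Fin (m+1) → ℚ) : Prop :=
  IsIntegralWt m l ∧ 0 ≤ l 0 ∧
  (∀ i j : ℕ, 1 ≤ i → i ≤ j → j ≤ m → l (j : Fin (m+1)) ≤ l (i : Fin (m+1))) ∧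
  (∀ i : ℕ, 1 ≤ i → i ≤ m → 0 ≤ l (i : Fin (m+1))) ∧
  (∀ i : ℕ, 1 ≤ i → i ≤ m → l 0 < (i : ℚ) → l (i : Fin (m+1)) = 0)

/-- `λ` is atypical (w.r.t. a given `ρ`): `⟨λ+ρ, δ+s·ε_i⟩ = 0` for some `1 ≤ i ≤ m`, `s = ±1`. -/
def Atyp (m : ℕ) (ρ l : Fin (m+1) → ℚ) : Prop :=
  ∃ i : ℕ, 1 ≤ i ∧ i ≤ m ∧ ∃ s : ℚ, (s = 1 ∨ s = -1) ∧
    form m (l + ρ) (eps m 0 + s • eps m i) = 0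

abbrev GLQ (m : ℕ) := (Fin (m+1) → ℚ) ≃ₗ[ℚ] (Fin (m+1) → ℚ)

/-- Permutations of the coordinates `1, …, m` (fixing coordinate `0`). -/
def permSet (m : ℕ) : Set (GLQ m) :=
  {w | ∃ σ : Equiv.Perm (Fin (m+1)), σ 0 = 0 ∧ ∀ v, w v = v ∘ σ}

/-- The sign change of coordinate `0`. -/
def flip0Set (m : ℕ) : Set (GLQ m) :=
  {w | ∀ v k, w v k = if k = 0 then -(v k) else v k}

/-- Simultaneous sign changes of two coordinates among `1, …, m`. -/
def doubleFlipSet (m : ℕ) : Set (GLQ m) :=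
  {w | ∃ i j : Fin (m+1), i ≠ 0 ∧ j ≠ 0 ∧ i ≠ j ∧
    ∀ v k, w v k = if k = i ∨ k = j then -(v k) else v k}

/-- Sign changes of a single coordinate among `1, …, m`. -/
def singleFlipSet (m : ℕ) : Set (GLQ m) :=
  {w | ∃ i : Fin (m+1), i ≠ 0 ∧ ∀ v k, w v k = if k = i then -(v k) else v k}

/-- The Weyl group for `osp(2m|2)`. -/
def WD (m : ℕ) : Subgroup (GLQ m) :=
  Subgroup.closure (permSet m ∪ doubleFlipSet m ∪ flip0Set m)

/-- The Weyl group for `osp(2m+1|2)`. -/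
def WB (m : ℕ) : Subgroup (GLQ m) :=
  Subgroup.closure (permSet m ∪ singleFlipSet m ∪ flip0Set m)

/-- The block equivalence: the smallest equivalence relation with
`μ ∼ μ+α` for odd roots `α = ±(δ±ε_i)` with `⟨μ+ρ, α⟩ = 0`, and
`μ ∼ w(μ+ρ)−ρ` for `w ∈ W`. -/
def blockRel (m : ℕ) (ρ : Fin (m+1) → ℚ) (W : Subgroup (GLQ m)) :
    (Fin (m+1) → ℚ) → (Fin (m+1) → ℚ) → Prop :=
  Relation.EqvGen (fun μ ν =>
    (∃ i : ℕ, 1 ≤ i ∧ i ≤ m ∧ ∃ s t : ℚ, (s = 1 ∨ s = -1) ∧ (t = 1 ∨ t = -1) ∧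
      form m (μ + ρ) (t • (eps m 0 + s • eps m i)) = 0 ∧
      ν = μ + t • (eps m 0 + s • eps m i)) ∨
    (∃ w ∈ W, ν = w (μ + ρ) - ρ))

def blockD (m : ℕ) : (Fin (m+1) → ℚ) → (Fin (m+1) → ℚ) → Prop :=
  blockRel m (rhoD m) (WD m)

def blockB (m : ℕ) : (Fin (m+1) → ℚ) → (Fin (m+1) → ℚ) → Prop :=
  blockRel m (rhoB m) (WB m)

/-- The set `𝒫_λ = 𝒫_{λ+} ∪ 𝒫_{λ−}` for `osp(2m|2)`. -/
noncomputable def PlamD (m : ℕ) (l : Fin (m+1) → ℚ) : Set (Fin (m+1) → ℚ) :=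
  {μ | PD m μ ∧
    (μ = l + eps m 0 ∨ μ = l - eps m 0 ∨
     (∃ i : ℕ, 1 ≤ i ∧ i ≤ m - 1 ∧ (μ = l + eps m i ∨ μ = l - eps m i)) ∨
     (0 ≤ l (m : Fin (m+1)) ∧ μ = l + eps m m) ∨
     (l (m : Fin (m+1)) ≤ 0 ∧ μ = l - eps m m) ∨
     (l (m : Fin (m+1)) < 0 ∧ μ = l + eps m m) ∨
     (0 < l (m : Fin (m+1)) ∧ μ = l - eps m m))}

/-- The set `𝒫_λ = 𝒫_{λ+} ∪ 𝒫_{λ−}` for `osp(2m+1|2)`. -/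
noncomputable def PlamB (m : ℕ) (l : Fin (m+1) → ℚ) : Set (Fin (m+1) → ℚ) :=
  {μ | PB m μ ∧
    ((∃ i : ℕ, i ≤ m ∧ (μ = l + eps m i ∨ μ = l - eps m i)) ∨
     (l (m : Fin (m+1)) ≠ 0 ∧ μ = l))}

/-- The weight `λ^{j,q}`. -/
noncomputable def lamJQ (m : ℕ) (l : Fin (m+1) → ℚ) (l0 j : ℕ) (q : ℤ) : Fin (m+1) → ℚ :=
  ((j : ℚ) - (q : ℚ)) • eps m 0 + (∑ i ∈ Finset.Icc 1 j, l (i : Fin (m+1)) • eps m i) +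
    (q : ℚ) • eps m (j + 1) +
    ∑ i ∈ Finset.Icc (j+1) l0, (l (i : Fin (m+1)) + 1) • eps m (i+1)

/-- The weight `λ^{j,q}_−`. -/
noncomputable def lamJQm (m : ℕ) (l : Fin (m+1) → ℚ) (l0 j : ℕ) (q : ℤ) : Fin (m+1) → ℚ :=
  ((j : ℚ) - (q : ℚ)) • eps m 0 + (∑ i ∈ Finset.Icc 1 j, l (i : Fin (m+1)) • eps m i) +
    (q : ℚ) • eps m (j + 1) +
    (∑ i ∈ Finset.Icc (j+1) (l0 - 1), (l (i : Fin (m+1)) + 1) • eps m (i+1)) -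
    (l (l0 : Fin (m+1)) + 1) • eps m (l0 + 1)

/-- `λ^δ` for `osp(2m|2)`: coordinate `0` becomes `2m−2−λ₀`. -/
noncomputable def deltaD (m : ℕ) (l : Fin (m+1) → ℚ) : Fin (m+1) → ℚ :=
  fun i => if i = 0 then 2*(m : ℚ) - 2 - l 0 else l i

/-- `λ^δ` for `osp(2m+1|2)`: coordinate `0` becomes `2m−1−λ₀`. -/
noncomputable def deltaB (m : ℕ) (l : Fin (m+1) → ℚ) : Fin (m+1) → ℚ :=
  fun i => if i = 0 then 2*(m : ℚ) - 1 - l 0 else l i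

section Helpers

lemma natCast_fin_val (m j : ℕ) (hj : j ≤ m) : ((j : Fin (m+1)) : ℕ) = j := by
  rw [Fin.val_natCast]; exact Nat.mod_eq_of_lt (by omega)

lemma natCast_fin_inj (m i j : ℕ) (hi : i ≤ m) (hj : j ≤ m) :
    (i : Fin (m+1)) = (j : Fin (m+1)) ↔ i = j := by
  constructor
  · intro h
    have h2 := congrArg Fin.val h
    rwa [natCast_fin_val m i hi, natCast_fin_val m j hj] at h2
  · intro h; rw [h]

lemma natCast_fin_ne_zero (m j : ℕ) (hj1 : 1 ≤ j) (hjm : j ≤ m) :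
    (j : Fin (m+1)) ≠ 0 := by
  intro h
  have h2 := congrArg Fin.val h
  rw [natCast_fin_val m j hjm] at h2
  simp at h2; omega

lemma eps_apply (m i : ℕ) (j : Fin (m+1)) :
    eps m i j = if j = (i : Fin (m+1)) then 1 else 0 := by
  simp [eps, Pi.single_apply]

lemma form_smul (m : ℕ) (v w : Fin (m+1) → ℚ) (c : ℚ) :
    form m v (c • w) = c * form m v w := by
  rw [form, form, mul_add, Finset.mul_sum]
  congr 1
  · simp; ring
  · apply Finset.sum_congr rfl
    intro i _
    split <;> simp <;> ring

lemma form_eps (m : ℕ) (v : Fin (m+1) → ℚ) (i : ℕ) (hi1 : 1 ≤ i) (him : i ≤ m) :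
    form m v (eps m 0 + eps m i) = -(v 0) + v (i : Fin (m+1)) := by
  have hne : (i : Fin (m+1)) ≠ 0 := natCast_fin_ne_zero m i hi1 him
  rw [form]
  congr 1
  · have : (eps m 0 + eps m i) 0 = 1 := by
      simp [eps_apply, hne.symm]
    rw [this, mul_one]
  · rw [Finset.sum_eq_single (i : Fin (m+1))]
    · simp [eps_apply, hne]
    · intro c _ hc
      by_cases h0 : c = 0
      · simp [h0]
      · simp [h0, eps_apply, hc]
    · simp

end Helpers

section Chain

lemma rhoB_zero (m : ℕ) : rhoB m 0 = 1/2 - m := by simp [rhoB]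

lemma rhoB_apply (m i : ℕ) (hi1 : 1 ≤ i) (him : i ≤ m) :
    rhoB m (i : Fin (m+1)) = (m : ℚ) - i + 1/2 := by
  rw [rhoB]
  rw [if_neg (natCast_fin_ne_zero m i hi1 him), natCast_fin_val m i him]

lemma step_apply (m k : ℕ) (l : Fin (m+1) → ℚ) (j : Fin (m+1)) :
    (l + (-1 : ℚ) • (eps m 0 + (1:ℚ) • eps m k)) j
      = l j - (if j = (0 : Fin (m+1)) then 1 else 0)
          - (if j = (k : Fin (m+1)) then 1 else 0) := by
  simp [eps_apply]
  ring

lemma chainB (m : ℕ) (n : ℕ) : ∀ (k : ℕ) (l : Fin (m+1) → ℚ), 1 ≤ k → k + n ≤ m →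
    (∀ i : ℕ, k ≤ i → i ≤ k + n → l (i : Fin (m+1)) = l (k : Fin (m+1))) →
    form m (l + rhoB m) (eps m 0 + eps m k) = 0 →
    blockB m l (l - ((n : ℚ) + 1) • eps m 0 - ∑ i ∈ Finset.Icc k (k+n), eps m i) := by
  induction n with
  | zero =>
    intro k l hk1 hkm _ hat
    apply Relation.EqvGen.rel
    left
    refine ⟨k, hk1, by omega, 1, -1, Or.inl rfl, Or.inr rfl, ?_, ?_⟩
    · rw [form_smul, one_smul]
      show (-1 : ℚ) * form m (l + rhoB m) (eps m 0 + eps m k) = 0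
      rw [hat]; ring
    · simp only [Nat.add_zero, Finset.Icc_self, Finset.sum_singleton]
      push_cast
      module
  | succ n ih =>
    intro k l hk1 hkm hconst hat
    set l' : Fin (m+1) → ℚ := l + (-1 : ℚ) • (eps m 0 + (1:ℚ) • eps m k) with hl'
    have hstep : blockB m l l' := by
      apply Relation.EqvGen.rel
      left
      exact ⟨k, hk1, by omega, 1, -1, Or.inl rfl, Or.inr rfl, by
        rw [form_smul, one_smul]
        show (-1 : ℚ) * form m (l + rhoB m) (eps m 0 + eps m k) = 0
        rw [hat]; ring, by rw [hl', one_smul]⟩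
    have hkm' : k ≤ m := by omega
    have hk0 : (k : Fin (m+1)) ≠ (0 : Fin (m+1)) := natCast_fin_ne_zero m k hk1 hkm'
    have hl'k : ∀ i : ℕ, k + 1 ≤ i → i ≤ m →
        l' (i : Fin (m+1)) = l (i : Fin (m+1)) := by
      intro i hi1 him
      rw [hl', step_apply]
      rw [if_neg, if_neg]
      · ring
      · rw [natCast_fin_inj m i k him hkm']; omega
      · exact natCast_fin_ne_zero m i (by omega) him
    have hconst' : ∀ i : ℕ, k + 1 ≤ i → i ≤ (k+1) + n →
        l' (i : Fin (m+1)) = l' ((k+1 : ℕ) : Fin (m+1)) := by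
      intro i hi1 hi2
      rw [hl'k i hi1 (by omega), hl'k (k+1) (le_refl _) (by omega),
        hconst i (by omega) (by omega), hconst (k+1) (by omega) (by omega)]
    have hat' : form m (l' + rhoB m) (eps m 0 + eps m (k+1)) = 0 := by
      rw [form_eps m _ (k+1) (by omega) (by omega)]
      rw [form_eps m _ k hk1 hkm'] at hat
      have e1 : (l' + rhoB m) 0 = (l + rhoB m) 0 - 1 := by
        show l' 0 + rhoB m 0 = l 0 + rhoB m 0 - 1
        have : l' 0 = l 0 - 1 := by
          rw [hl', step_apply, if_pos rfl, if_neg (Ne.symm hk0)]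
          ring
        rw [this]; ring
      have e2 : (l' + rhoB m) ((k+1 : ℕ) : Fin (m+1)) = (l + rhoB m) (k : Fin (m+1)) - 1 := by
        show l' _ + rhoB m _ = l _ + rhoB m _ - 1
        rw [hl'k (k+1) (le_refl _) (by omega), hconst (k+1) (by omega) (by omega),
          rhoB_apply m (k+1) (by omega) (by omega), rhoB_apply m k hk1 hkm']
        push_cast
        ring
      rw [e1, e2]
      linarith
    have hmain := ih (k+1) l' (by omega) (by omega) hconst' hat'
    have hsum : ∑ i ∈ Finset.Icc k (k+(n+1)), eps m i
        = eps m k + ∑ i ∈ Finset.Icc (k+1) ((k+1)+n), eps m i := by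
      have hins : Finset.Icc k (k+(n+1)) = insert k (Finset.Icc (k+1) ((k+1)+n)) := by
        ext x
        simp only [Finset.mem_Icc, Finset.mem_insert]
        omega
      rw [hins, Finset.sum_insert (by simp)]
    have hfinal : l' - ((n : ℚ) + 1) • eps m 0 - ∑ i ∈ Finset.Icc (k+1) ((k+1)+n), eps m i
        = l - (((n:ℕ)+1 : ℚ) + 1) • eps m 0 - ∑ i ∈ Finset.Icc k (k+(n+1)), eps m i := by
      rw [hsum, hl']
      push_cast
      module
    rw [hfinal] at hmain
    have : ((n:ℚ) + 1 + 1) = (((n+1:ℕ)) : ℚ) + 1 := by push_cast; ring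
    rw [this] at hmain
    exact Relation.EqvGen.trans _ _ _ hstep hmain

end Chain

section Main

lemma sum_eps_apply (m k t : ℕ) (htm : t ≤ m) (j : ℕ) (hj : j ≤ m) :
    (∑ i ∈ Finset.Icc k t, eps m i) ((j : Fin (m+1)))
      = if k ≤ j ∧ j ≤ t then 1 else 0 := by
  rw [Finset.sum_apply]
  by_cases hmem : k ≤ j ∧ j ≤ t
  · rw [if_pos hmem]
    rw [Finset.sum_eq_single j]
    · rw [eps_apply, if_pos rfl]
    · intro i hi hij
      rw [eps_apply, if_neg]
      rw [natCast_fin_inj m j i hj (le_trans (Finset.mem_Icc.mp hi).2 htm)]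
      exact fun h => hij h.symm
    · intro h
      exact absurd (Finset.mem_Icc.mpr hmem) h
  · rw [if_neg hmem]
    apply Finset.sum_eq_zero
    intro i hi
    rw [eps_apply, if_neg]
    rw [natCast_fin_inj m j i hj (le_trans (Finset.mem_Icc.mp hi).2 htm)]
    intro h
    rw [Finset.mem_Icc] at hi
    omega

lemma aux_phi_dominant_equiv_B (m : ℕ) (hm : 1 ≤ m) (l : Fin (m+1) → ℚ) (hP : PB m l)
    (k : ℕ) (hk1 : 1 ≤ k) (hkm : k ≤ m)
    (hat : form m (l + rhoB m) (eps m 0 + eps m k) = 0)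
    (hlk : l (k : Fin (m+1)) ≠ 0)
    (t : ℕ) (htk : k ≤ t) (htm : t ≤ m)
    (ht : l (t : Fin (m+1)) = l (k : Fin (m+1)))
    (htmax : ∀ u : ℕ, t < u → u ≤ m → l (u : Fin (m+1)) ≠ l (k : Fin (m+1))) :
    PB m (l - ((t : ℚ) - (k : ℚ) + 1) • eps m 0 - ∑ i ∈ Finset.Icc k t, eps m i) ∧
    blockB m l (l - ((t : ℚ) - (k : ℚ) + 1) • eps m 0 - ∑ i ∈ Finset.Icc k t, eps m i) := by
  obtain ⟨hint, hl0, hmono, hnonneg, hzero⟩ := hP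
  set c : ℚ := (t : ℚ) - (k : ℚ) + 1 with hc
  set v : Fin (m+1) → ℚ :=
    l - c • eps m 0 - ∑ i ∈ Finset.Icc k t, eps m i with hv
  -- coordinate evaluation
  have hva : ∀ j : ℕ, j ≤ m → v ((j : Fin (m+1)))
      = l ((j : Fin (m+1))) - (if j = 0 then c else 0)
        - (if k ≤ j ∧ j ≤ t then 1 else 0) := by
    intro j hj
    rw [hv]
    simp only [Pi.sub_apply, Pi.smul_apply, smul_eq_mul]
    rw [sum_eps_apply m k t htm j hj, eps_apply]
    by_cases h0 : j = 0
    · subst h0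
      rw [if_pos rfl, if_pos rfl, mul_one]
    · rw [if_neg h0, if_neg, mul_zero]
      rw [natCast_fin_inj m j 0 hj (by omega)]
      exact h0
  have hvap : ∀ j : ℕ, 1 ≤ j → j ≤ m → v ((j : Fin (m+1)))
      = l ((j : Fin (m+1))) - (if k ≤ j ∧ j ≤ t then 1 else 0) := by
    intro j hj1 hjm
    rw [hva j hjm, if_neg (by omega : ¬ j = 0)]
    ring
  -- λ is constant on [k,t]
  have hconst : ∀ i : ℕ, k ≤ i → i ≤ t → l (i : Fin (m+1)) = l (k : Fin (m+1)) := by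
    intro i hik hit
    have h1 : l (i : Fin (m+1)) ≤ l (k : Fin (m+1)) := hmono k i hk1 hik (by omega)
    have h2 : l (t : Fin (m+1)) ≤ l (i : Fin (m+1)) := hmono i t (by omega) hit htm
    rw [ht] at h2
    linarith
  -- lk ≥ 1
  have hlk1 : 1 ≤ l (k : Fin (m+1)) := by
    obtain ⟨z, hz⟩ := hint (k : Fin (m+1))
    have h0 : 0 ≤ l (k : Fin (m+1)) := hnonneg k hk1 hkm
    rw [hz] at h0 hlk ⊢
    have : (0:ℤ) ≤ z := by exact_mod_cast h0
    have : z ≠ 0 := by exact_mod_cast hlk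
    have : (1:ℤ) ≤ z := by omega
    exact_mod_cast this
  -- form of atypicality
  have hl0eq : l 0 = l (k : Fin (m+1)) + 2*(m:ℚ) - k := by
    rw [form_eps m _ k hk1 hkm] at hat
    have e0 : (l + rhoB m) 0 = l 0 + (1/2 - m) := by
      show l 0 + rhoB m 0 = _
      rw [rhoB_zero]
    have ek : (l + rhoB m) (k : Fin (m+1)) = l (k : Fin (m+1)) + ((m:ℚ) - k + 1/2) := by
      show l _ + rhoB m _ = _
      rw [rhoB_apply m k hk1 hkm]
    rw [e0, ek] at hat
    linarith
  -- for j > t: l j ≤ l k - 1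
  have hgt : ∀ j : ℕ, t < j → j ≤ m → l (j : Fin (m+1)) ≤ l (k : Fin (m+1)) - 1 := by
    intro j hjt hjm
    obtain ⟨zj, hzj⟩ := hint (j : Fin (m+1))
    obtain ⟨zk, hzk⟩ := hint (k : Fin (m+1))
    have h1 : l (j : Fin (m+1)) ≤ l (t : Fin (m+1)) := hmono t j (by omega) (by omega) hjm
    rw [ht] at h1
    have h2 := htmax j hjt hjm
    rw [hzj, hzk] at h1 h2 ⊢
    have hle : zj ≤ zk := by exact_mod_cast h1
    have hne : zj ≠ zk := by exact_mod_cast h2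
    have : zj ≤ zk - 1 := by omega
    calc (zj : ℚ) ≤ ((zk - 1 : ℤ) : ℚ) := by exact_mod_cast this
      _ = (zk : ℚ) - 1 := by push_cast; ring
  have hv0 : v 0 = l (k : Fin (m+1)) - 1 + 2*(m:ℚ) - t := by
    have := hva 0 (by omega)
    rw [Nat.cast_zero] at this
    rw [this, if_pos rfl, if_neg (by omega : ¬ (k ≤ 0 ∧ 0 ≤ t)), hl0eq, hc]
    ring
  constructor
  · refine ⟨?_, ?_, ?_, ?_, ?_⟩
    · -- integral
      intro j
      obtain ⟨z, hz⟩ := hint j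
      have hjm : (j : ℕ) ≤ m := by omega
      have hj : ((((j:ℕ)) : Fin (m+1))) = j := by
        ext; rw [natCast_fin_val m _ hjm]
      refine ⟨z - (if (j:ℕ) = 0 then (t:ℤ) - k + 1 else 0)
        - (if k ≤ (j:ℕ) ∧ (j:ℕ) ≤ t then 1 else 0), ?_⟩
      have := hva (j:ℕ) hjm
      rw [hj] at this
      rw [this, hz, hc]
      push_cast
      split <;> split <;> ring
    · -- 0 ≤ v 0
      rw [hv0]
      have h1 : (t:ℚ) ≤ m := by exact_mod_cast htm
      linarith
    · -- monotone
      intro i j hi1 hij hjm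
      rw [hvap i hi1 (by omega), hvap j (by omega) hjm]
      by_cases hi : k ≤ i ∧ i ≤ t <;> by_cases hj : k ≤ j ∧ j ≤ t
      · rw [if_pos hi, if_pos hj]
        have := hmono i j hi1 hij hjm
        linarith
      · rw [if_pos hi, if_neg hj]
        have hjt : t < j := by omega
        have h1 := hgt j hjt hjm
        have h2 := hconst i hi.1 hi.2
        linarith
      · rw [if_neg hi, if_pos hj]
        have := hmono i j hi1 hij hjm
        linarith
      · rw [if_neg hi, if_neg hj]
        have := hmono i j hi1 hij hjm
        linarith
    · -- nonneg
      intro i hi1 him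
      rw [hvap i hi1 him]
      by_cases hi : k ≤ i ∧ i ≤ t
      · rw [if_pos hi]
        have := hconst i hi.1 hi.2
        linarith
      · rw [if_neg hi]
        have := hnonneg i hi1 him
        linarith
    · -- zero condition (vacuous)
      intro i hi1 him hlt
      exfalso
      rw [hv0] at hlt
      have h1 : (t:ℚ) ≤ m := by exact_mod_cast htm
      have h2 : (i:ℚ) ≤ m := by exact_mod_cast him
      linarith
  · -- block equivalence
    have := chainB m (t - k) k l hk1 (by omega)
      (by intro i h1 h2; exact hconst i h1 (by omega)) hat
    have heq : (((t - k : ℕ) : ℚ) + 1) = c := by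
      rw [hc]
      have : ((t - k : ℕ) : ℚ) = (t:ℚ) - k := by
        have : ((t - k : ℕ) : ℤ) = (t:ℤ) - k := by omega
        exact_mod_cast this
      rw [this]
    have hkk : k + (t - k) = t := by omega
    rw [heq, hkk] at this
    exact this

end Main

/-- Section 5.5 for `osp(2m+1|2)`: if `λ ∈ 𝒫` is `(δ+ε_k)`-atypical with `λ_k ≠ 0`,
and `t` is the largest index with `k ≤ t ≤ m` and `λ_t = λ_k`, then
`φ(λ) = λ − (t−k+1)δ − Σ_{i=k}^t ε_i ∈ 𝒫` and `λ ∼ φ(λ)`. -/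
theorem phi_dominant_equiv_B (m : ℕ) (hm : 1 ≤ m) (l : Fin (m+1) → ℚ) (hP : PB m l)
    (k : ℕ) (hk1 : 1 ≤ k) (hkm : k ≤ m)
    (hat : form m (l + rhoB m) (eps m 0 + eps m k) = 0)
    (hlk : l (k : Fin (m+1)) ≠ 0)
    (t : ℕ) (htk : k ≤ t) (htm : t ≤ m)
    (ht : l (t : Fin (m+1)) = l (k : Fin (m+1)))
    (htmax : ∀ u : ℕ, t < u → u ≤ m → l (u : Fin (m+1)) ≠ l (k : Fin (m+1))) :
    PB m (l - ((t : ℚ) - (k : ℚ) + 1) • eps m 0 - ∑ i ∈ Finset.Icc k t, eps m i) ∧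
    blockB m l (l - ((t : ℚ) - (k : ℚ) + 1) • eps m 0 - ∑ i ∈ Finset.Icc k t, eps m i) := by
  exact aux_phi_dominant_equiv_B m hm l hP k hk1 hkm hat hlk t htk htm ht htmax
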